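/- Let P be a finite poset with gap(P) = c(P) + |P| - (max(P) + min(P) + edges(P)). Then gap(P) = 0 if and only if every element v of P has crossing number (uc(v)-1)(dc(v)-1) equal to zero. -/

import Mathlib

open Classical

variable {α : Type*}

/-- A saturated chain from `v` up to a maximal element: a list `v = v₀ ⋖ v₁ ⋖ … ⋖ vₖ`
with `vₖ` maximal. -/
def UpChain [PartialOrder α] (v : α) (l : List α) : Prop :=
  l.Chain' (· ⋖ ·) ∧ l.head? = some v ∧ ∃ m, l.getLast? = some m ∧ IsMax m

/-- A saturated chain from a minimal element up to `v`. -/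
def DownChain [PartialOrder α] (v : α) (l : List α) : Prop :=
  l.Chain' (· ⋖ ·) ∧ (∃ m, l.head? = some m ∧ IsMin m) ∧ l.getLast? = some v

/-- `uc v` : the number of saturated chains from `v` up to a maximal element. -/
noncomputable def uc [PartialOrder α] (v : α) : ℕ := Nat.card {l : List α // UpChain v l}

/-- `dc v` : the number of saturated chains from `v` down to a minimal element. -/
noncomputable def dc [PartialOrder α] (v : α) : ℕ := Nat.card {l : List α // DownChain v l}

/-- A maximal chain: a saturated chain from a minimal element to a maximal element. -/
def IsMaxChainList [PartialOrder α] (l : List α) : Prop :=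
  l.Chain' (· ⋖ ·) ∧ (∃ m, l.head? = some m ∧ IsMin m) ∧ ∃ m, l.getLast? = some m ∧ IsMax m

/-- `c(P)`: the number of maximal chains. -/
noncomputable def numMaxChains (α : Type*) [PartialOrder α] : ℕ :=
  Nat.card {l : List α // IsMaxChainList l}

/-- `max(P)`: the number of maximal elements. -/
noncomputable def numMax (α : Type*) [PartialOrder α] : ℕ := Nat.card {v : α // IsMax v}

/-- `min(P)`: the number of minimal elements. -/
noncomputable def numMin (α : Type*) [PartialOrder α] : ℕ := Nat.card {v : α // IsMin v}

/-- `edges(P)`: the number of cover relations (edges of the Hasse diagram). -/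
noncomputable def numEdges (α : Type*) [PartialOrder α] : ℕ :=
  Nat.card {p : α × α // p.1 ⋖ p.2}

/-- `gap(P) = c(P) + |P| - (max(P) + min(P) + edges(P))`. -/
noncomputable def gap (α : Type*) [PartialOrder α] : ℤ :=
  (numMaxChains α : ℤ) + Nat.card α - ((numMax α : ℤ) + numMin α + numEdges α)

/-- The crossing number `(uc(v)-1)(dc(v)-1)` of `v`. -/
noncomputable def crossingNumber [PartialOrder α] (v : α) : ℕ := (uc v - 1) * (dc v - 1)

/-- `c` is the center of an X-shaped subposet: there are `a, b < c < d, e`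
with `a ∥ b` and `d ∥ e`. -/
def IsXCenter [PartialOrder α] (c : α) : Prop :=
  ∃ a b d e : α, a < c ∧ b < c ∧ c < d ∧ c < e ∧
    ¬ a ≤ b ∧ ¬ b ≤ a ∧ ¬ d ≤ e ∧ ¬ e ≤ d

/-- `P` contains an X-shaped subposet. -/
def HasX (α : Type*) [PartialOrder α] : Prop := ∃ c : α, IsXCenter c


section Aux
variable [PartialOrder α]

instance : IsAntisymm α (· < ·) := ⟨fun _ _ h h' => absurd h' (asymm h)⟩

lemma covChain_sorted {l : List α} (h : l.Chain' (· ⋖ ·)) : l.Pairwise (· < ·) :=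
  List.isChain_iff_pairwise.mp (List.IsChain.imp (fun _ _ hc => hc.lt) h)

lemma covChain_eq_of_toFinset [DecidableEq α] {l₁ l₂ : List α} (h₁ : l₁.Chain' (· ⋖ ·))
    (h₂ : l₂.Chain' (· ⋖ ·)) (h : l₁.toFinset = l₂.toFinset) : l₁ = l₂ := by
  have s₁ := covChain_sorted h₁
  have s₂ := covChain_sorted h₂
  exact List.Perm.eq_of_pairwise (fun _ _ _ _ h1 h2 => absurd h2 (asymm h1)) s₁ s₂
    (List.perm_of_nodup_nodup_toFinset_eq s₁.nodup s₂.nodup h)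

lemma finite_chainSubtype [Finite α] {P : List α → Prop} (h : ∀ l, P l → l.Chain' (· ⋖ ·)) :
    Finite {l : List α // P l} := by
  have : Fintype α := Fintype.ofFinite α
  exact Finite.of_injective (fun l => l.val.toFinset) fun l₁ l₂ hl =>
    Subtype.ext (covChain_eq_of_toFinset (h _ l₁.2) (h _ l₂.2) hl)

instance finUp [Finite α] (v : α) : Finite {l : List α // UpChain v l} :=
  finite_chainSubtype fun _ h => h.1

lemma upChain_singleton {v : α} (h : IsMax v) : UpChain v [v] :=
  ⟨List.isChain_singleton v, rfl, v, rfl, h⟩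

lemma upChain_eq_singleton {v : α} (h : IsMax v) {l : List α} (hl : UpChain v l) : l = [v] := by
  obtain ⟨hc, hh, m, hlast, hm⟩ := hl
  match l, hh with
  | a :: t, hh =>
    simp only [List.head?_cons, Option.some.injEq] at hh
    subst hh
    match t with
    | [] => rfl
    | b :: t' => exact absurd (List.isChain_cons_cons.mp hc).1.lt h.not_lt

lemma uc_max {v : α} [Fintype α] (h : IsMax v) : uc v = 1 := by
  rw [uc, Nat.card_eq_one_iff_exists]
  exact ⟨⟨[v], upChain_singleton h⟩, fun l => Subtype.ext (upChain_eq_singleton h l.2)⟩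

lemma upChain_cons {v w : α} {t : List α} (hvw : v ⋖ w) (ht : UpChain w t) :
    UpChain v (v :: t) := by
  obtain ⟨hc, hh, m, hlast, hm⟩ := ht
  refine ⟨List.isChain_cons.mpr ⟨fun y hy => by rw [hh] at hy; cases hy; exact hvw, hc⟩, rfl,
    m, ?_, hm⟩
  match t, hh with
  | a :: t', _ => simpa using hlast

lemma upChain_dest {v : α} (hv : ¬ IsMax v) {l : List α} (hl : UpChain v l) :
    ∃ w t, v ⋖ w ∧ UpChain w t ∧ l = v :: t := by
  obtain ⟨hc, hh, m, hlast, hm⟩ := hl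
  match l, hh with
  | [v'], hh =>
    simp only [List.head?_cons, Option.some.injEq] at hh
    subst hh
    simp only [List.getLast?_singleton, Option.some.injEq] at hlast
    exact absurd (hlast ▸ hm) hv
  | v' :: w :: t', hh =>
    simp only [List.head?_cons, Option.some.injEq] at hh
    subst hh
    obtain ⟨h1, h2⟩ := List.isChain_cons_cons.mp hc
    exact ⟨w, w :: t', h1, ⟨h2, rfl, m, by simpa using hlast, hm⟩, rfl⟩

lemma uc_rec [Fintype α] {v : α} (hv : ¬ IsMax v) :
    uc v = ∑ w : {w // v ⋖ w}, uc w.1 := by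
  have hbij : Function.Bijective
      (fun x : (Σ w : {w // v ⋖ w}, {t : List α // UpChain w.1 t}) =>
        (⟨v :: x.2.1, upChain_cons x.1.2 x.2.2⟩ : {l : List α // UpChain v l})) := by
    constructor
    · rintro ⟨⟨w, hw⟩, ⟨t, ht⟩⟩ ⟨⟨w', hw'⟩, ⟨t', ht'⟩⟩ h
      simp only [Subtype.mk.injEq, List.cons.injEq, true_and] at h
      subst h
      obtain rfl : w = w' := Option.some.inj (ht.2.1.symm.trans ht'.2.1)
      rfl
    · rintro ⟨l, hl⟩
      obtain ⟨w, t, hvw, ht, rfl⟩ := upChain_dest hv hl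
      exact ⟨⟨⟨w, hvw⟩, ⟨t, ht⟩⟩, rfl⟩
  have key := (Nat.card_eq_of_bijective _ hbij).symm
  letI : ∀ w : {w // v ⋖ w}, Fintype {t : List α // UpChain w.1 t} :=
    fun w => Fintype.ofFinite _
  simp only [uc]
  rw [key, Nat.card_eq_fintype_card, Fintype.card_sigma]
  exact Finset.sum_congr rfl fun w _ => by rw [Nat.card_eq_fintype_card]

def dualListEquiv : List α ≃ List αᵒᵈ where
  toFun l := (l.reverse.map OrderDual.toDual)
  invFun l := (l.map OrderDual.ofDual).reverse
  left_inv l := by simp [Function.comp_def]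
  right_inv l := by simp [Function.comp_def]

lemma dualList_head? (l : List α) :
    (dualListEquiv l).head? = Option.map OrderDual.toDual l.getLast? := by
  simp [dualListEquiv, List.head?_reverse]

lemma dualList_getLast? (l : List α) :
    (dualListEquiv l).getLast? = Option.map OrderDual.toDual l.head? := by
  simp [dualListEquiv, List.getLast?_map, List.getLast?_reverse]

lemma dualList_chain' {l : List α} :
    (dualListEquiv l).Chain' (· ⋖ ·) ↔ l.Chain' (· ⋖ ·) := by
  unfold List.Chain'
  rw [dualListEquiv, Equiv.coe_fn_mk, List.isChain_map, List.isChain_reverse]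
  constructor
  · exact fun h => h.imp fun a b hab => toDual_covBy_toDual_iff.mp hab
  · exact fun h => h.imp fun a b hab => toDual_covBy_toDual_iff.mpr hab

lemma downChain_iff_dual {v : α} {l : List α} :
    DownChain v l ↔ UpChain (OrderDual.toDual v) (dualListEquiv l) := by
  constructor
  · rintro ⟨hc, ⟨m, hh, hm⟩, hlast⟩
    refine ⟨dualList_chain'.mpr hc, ?_, OrderDual.toDual m, ?_, hm.toDual⟩
    · rw [dualList_head?, hlast]; rfl
    · rw [dualList_getLast?, hh]; rfl
  · rintro ⟨hc, hh, m, hlast, hm⟩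
    rw [dualList_getLast?] at hlast
    obtain ⟨a, ha, rfl⟩ := Option.map_eq_some_iff.mp hlast
    refine ⟨dualList_chain'.mp hc, ⟨a, ha, ?_⟩, ?_⟩
    · exact hm.ofDual
    · rw [dualList_head?] at hh
      obtain ⟨b, hb, hb2⟩ := Option.map_eq_some_iff.mp hh
      rwa [OrderDual.toDual.injective hb2] at hb

instance finDown [Finite α] (v : α) : Finite {l : List α // DownChain v l} :=
  finite_chainSubtype fun _ h => h.1

instance finMC [Finite α] : Finite {l : List α // IsMaxChainList l} :=
  finite_chainSubtype fun _ h => h.1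

lemma dc_eq_dual (v : α) : dc v = uc (OrderDual.toDual v) :=
  Nat.card_congr (Equiv.subtypeEquiv dualListEquiv fun _ => downChain_iff_dual)

end Aux

section Aux2
variable [Fintype α] [PartialOrder α]

lemma dc_min {v : α} (h : IsMin v) : dc v = 1 := by
  rw [dc_eq_dual]; exact uc_max h.toDual

def covDualEquiv (v : α) : {w : αᵒᵈ // OrderDual.toDual v ⋖ w} ≃ {x : α // x ⋖ v} where
  toFun w := ⟨OrderDual.ofDual w.1, toDual_covBy_toDual_iff.mp w.2⟩
  invFun x := ⟨OrderDual.toDual x.1, toDual_covBy_toDual_iff.mpr x.2⟩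
  left_inv w := rfl
  right_inv x := rfl

lemma dc_rec {v : α} (hv : ¬ IsMin v) :
    dc v = ∑ x : {x // x ⋖ v}, dc x.1 := by
  rw [dc_eq_dual, uc_rec (fun h => hv (isMax_toDual_iff.mp h))]
  exact Fintype.sum_equiv (covDualEquiv v) _ _
    (fun w => (dc_eq_dual (OrderDual.ofDual w.1)).symm)

lemma exists_upChain (v : α) : ∃ l, UpChain v l := by
  refine WellFounded.induction (C := fun x => ∃ l, UpChain x l)
    (Finite.to_wellFoundedGT (α := α)).wf v ?_
  intro x ih
  by_cases hx : IsMax x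
  · exact ⟨[x], upChain_singleton hx⟩
  · obtain ⟨b, hb⟩ := not_isMax_iff.mp hx
    obtain ⟨w, hw, -⟩ := exists_covBy_le_of_lt hb
    obtain ⟨t, ht⟩ := ih w hw.lt
    exact ⟨x :: t, upChain_cons hw ht⟩

lemma exists_downChain (v : α) : ∃ l, DownChain v l := by
  obtain ⟨l, h⟩ := exists_upChain (OrderDual.toDual v)
  exact ⟨dualListEquiv.symm l, downChain_iff_dual.mpr (by rwa [Equiv.apply_symm_apply])⟩

lemma uc_pos (v : α) : 1 ≤ uc v := by
  have : Nonempty {l : List α // UpChain v l} := nonempty_subtype.mpr (exists_upChain v)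
  exact Nat.card_pos

lemma dc_pos (v : α) : 1 ≤ dc v := by
  have : Nonempty {l : List α // DownChain v l} := nonempty_subtype.mpr (exists_downChain v)
  exact Nat.card_pos

lemma dc_le_of_covBy {v w : α} (h : v ⋖ w) : dc v ≤ dc w := by
  have hw : ¬ IsMin w := fun hm => hm.not_lt h.lt
  rw [dc_rec hw]
  exact Finset.single_le_sum (f := fun x : {x // x ⋖ w} => dc x.1)
    (fun i _ => Nat.zero_le _) (Finset.mem_univ ⟨v, h⟩)

lemma maxChains_eq : numMaxChains α = ∑ m : {m : α // IsMax m}, dc m.1 := by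
  have hbij : Function.Bijective
      (fun x : (Σ m : {m : α // IsMax m}, {l : List α // DownChain m.1 l}) =>
        (⟨x.2.1, x.2.2.1, x.2.2.2.1, x.1.1, x.2.2.2.2, x.1.2⟩ :
          {l : List α // IsMaxChainList l})) := by
    constructor
    · rintro ⟨⟨m, hm⟩, ⟨l, hl⟩⟩ ⟨⟨m', hm'⟩, ⟨l', hl'⟩⟩ h
      obtain rfl : l = l' := congrArg Subtype.val h
      obtain rfl : m = m' := Option.some.inj (hl.2.2.symm.trans hl'.2.2)
      rfl
    · rintro ⟨l, hc, hmin, m, hlast, hmax⟩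
      exact ⟨⟨⟨m, hmax⟩, ⟨l, hc, hmin, hlast⟩⟩, rfl⟩
  have key := (Nat.card_eq_of_bijective _ hbij).symm
  letI : ∀ m : {m : α // IsMax m}, Fintype {l : List α // DownChain m.1 l} :=
    fun m => Fintype.ofFinite _
  simp only [numMaxChains]
  rw [key, Nat.card_eq_fintype_card, Fintype.card_sigma]
  exact Finset.sum_congr rfl fun m _ => by rw [dc, Nat.card_eq_fintype_card]

noncomputable def od (v : α) : ℕ := Nat.card {w // v ⋖ w}

lemma od_max {v : α} (h : IsMax v) : od v = 0 := by
  haveI : IsEmpty {w // v ⋖ w} := ⟨fun w => h.not_lt w.2.lt⟩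
  simp [od]

lemma od_pos {v : α} (h : ¬ IsMax v) : 1 ≤ od v := by
  obtain ⟨b, hb⟩ := not_isMax_iff.mp h
  obtain ⟨w, hw, -⟩ := exists_covBy_le_of_lt hb
  have : Nonempty {w // v ⋖ w} := ⟨⟨w, hw⟩⟩
  exact Nat.card_pos

lemma od_le_uc {v : α} (h : ¬ IsMax v) : od v ≤ uc v := by
  rw [uc_rec h]
  have h2 : od v = ∑ _w : {w // v ⋖ w}, 1 := by
    simp [od, Nat.card_eq_fintype_card]
  rw [h2]
  exact Finset.sum_le_sum (fun w _ => uc_pos w.1)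

lemma edges_eq : Nat.card {p : α × α // p.1 ⋖ p.2} = ∑ v : α, od v := by
  rw [Nat.card_congr (Equiv.subtypeProdEquivSigmaSubtype (· ⋖ ·))]
  letI := fun v : α => Fintype.ofFinite {w // v ⋖ w}
  rw [Nat.card_eq_fintype_card, Fintype.card_sigma]
  exact Finset.sum_congr rfl fun v _ => by rw [od, Nat.card_eq_fintype_card]

lemma sum_pairs_fst {M : Type} [AddCommMonoid M] (f : α → α → M) :
    ∑ p : {p : α × α // p.1 ⋖ p.2}, f p.1.1 p.1.2 =
      ∑ v : α, ∑ w : {w // v ⋖ w}, f v w.1 := by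
  calc ∑ p : {p : α × α // p.1 ⋖ p.2}, f p.1.1 p.1.2
      = ∑ x : (Σ v : α, {w // v ⋖ w}), f x.1 x.2.1 :=
        Fintype.sum_equiv (Equiv.subtypeProdEquivSigmaSubtype (· ⋖ ·)) _ _ (fun p => rfl)
    _ = ∑ v : α, ∑ w : {w // v ⋖ w}, f v w.1 := by
        rw [← Finset.univ_sigma_univ, Finset.sum_sigma]

/-- swap equiv -/
def pairSwapEquiv : {p : α × α // p.1 ⋖ p.2} ≃ {q : α × α // q.2 ⋖ q.1} where
  toFun p := ⟨(p.1.2, p.1.1), p.2⟩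
  invFun q := ⟨(q.1.2, q.1.1), q.2⟩
  left_inv p := rfl
  right_inv q := rfl

lemma sum_pairs_snd {M : Type} [AddCommMonoid M] (f : α → α → M) :
    ∑ p : {p : α × α // p.1 ⋖ p.2}, f p.1.1 p.1.2 =
      ∑ w : α, ∑ x : {x // x ⋖ w}, f x.1 w := by
  calc ∑ p : {p : α × α // p.1 ⋖ p.2}, f p.1.1 p.1.2
      = ∑ q : {q : α × α // q.2 ⋖ q.1}, f q.1.2 q.1.1 :=
        Fintype.sum_equiv (pairSwapEquiv (α := α)) _ _ (fun p => rfl)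
    _ = ∑ x : (Σ w : α, {x // x ⋖ w}), f x.2.1 x.1 :=
        Fintype.sum_equiv (Equiv.subtypeProdEquivSigmaSubtype (fun a b => b ⋖ a)) _ _
          (fun q => rfl)
    _ = ∑ w : α, ∑ x : {x // x ⋖ w}, f x.1 w := by
        rw [← Finset.univ_sigma_univ, Finset.sum_sigma]

lemma count_id : ∑ v : α, od v * dc v =
    ∑ w ∈ Finset.univ.filter (fun w : α => ¬ IsMin w), dc w := by
  have h1 : ∀ v : α, od v * dc v = ∑ _w : {w // v ⋖ w}, dc v := by
    intro v
    simp [od, Nat.card_eq_fintype_card, Finset.sum_const, Finset.card_univ, mul_comm]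
  have h2 : ∀ w : α, (∑ x : {x // x ⋖ w}, dc x.1) = if IsMin w then 0 else dc w := by
    intro w
    by_cases hw : IsMin w
    · haveI : IsEmpty {x // x ⋖ w} := ⟨fun x => hw.not_lt x.2.lt⟩
      simp [hw]
    · rw [if_neg hw, ← dc_rec hw]
  calc ∑ v : α, od v * dc v = ∑ v : α, ∑ w : {w // v ⋖ w}, dc v := by
        exact Finset.sum_congr rfl fun v _ => h1 v
    _ = ∑ p : {p : α × α // p.1 ⋖ p.2}, dc p.1.1 := (sum_pairs_fst fun v _ => dc v).symm
    _ = ∑ w : α, ∑ x : {x // x ⋖ w}, dc x.1 := sum_pairs_snd fun x _ => dc x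
    _ = ∑ w : α, if IsMin w then 0 else dc w := Finset.sum_congr rfl fun w _ => h2 w
    _ = _ := by simp [Finset.sum_ite, Finset.filter_not]

lemma numMax_eq_filter : numMax α = (Finset.univ.filter (fun v : α => IsMax v)).card := by
  rw [numMax, Nat.card_eq_fintype_card, Fintype.card_subtype]

lemma numMin_eq_filter : numMin α = (Finset.univ.filter (fun v : α => IsMin v)).card := by
  rw [numMin, Nat.card_eq_fintype_card, Fintype.card_subtype]

lemma sum_dc_split :
    ∑ v : α, dc v = numMaxChains α + ∑ v ∈ Finset.univ.filter (fun v : α => ¬ IsMax v), dc v := by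
  rw [maxChains_eq, ← Finset.sum_filter_add_sum_filter_not Finset.univ IsMax (dc ·)]
  congr 1
  exact (@Finset.sum_subtype α ℕ _ (fun v : α => IsMax v) _
    (Finset.univ.filter (fun v : α => IsMax v)) (by simp) dc)

lemma sum_odc :
    (∑ v ∈ Finset.univ.filter (fun v : α => ¬ IsMax v), od v * dc v) + numMin α
      = ∑ v : α, dc v := by
  have h1 : (∑ v ∈ Finset.univ.filter (fun v : α => ¬ IsMax v), od v * dc v)
      = ∑ v : α, od v * dc v := by
    rw [← Finset.sum_filter_add_sum_filter_not Finset.univ IsMax (fun v => od v * dc v)]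
    have : ∑ v ∈ Finset.univ.filter (fun v : α => IsMax v), od v * dc v = 0 := by
      refine Finset.sum_eq_zero fun v hv => ?_
      rw [od_max (Finset.mem_filter.mp hv).2, zero_mul]
    omega
  have h2 : ∑ v ∈ Finset.univ.filter (fun v : α => IsMin v), dc v = numMin α := by
    rw [numMin_eq_filter,
      Finset.sum_congr rfl (fun v hv => dc_min (Finset.mem_filter.mp hv).2),
      Finset.sum_const, smul_eq_mul, mul_one]
  rw [h1, count_id, ← Finset.sum_filter_add_sum_filter_not Finset.univ IsMin (dc ·), ← h2]
  omega

lemma edges_split :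
    numEdges α = ∑ v ∈ Finset.univ.filter (fun v : α => ¬ IsMax v), od v := by
  rw [numEdges, edges_eq, ← Finset.sum_filter_add_sum_filter_not Finset.univ IsMax (od ·)]
  have : ∑ v ∈ Finset.univ.filter (fun v : α => IsMax v), od v = 0 :=
    Finset.sum_eq_zero fun v hv => od_max (Finset.mem_filter.mp hv).2
  omega

lemma card_split :
    Fintype.card α = numMax α + (Finset.univ.filter (fun v : α => ¬ IsMax v)).card := by
  rw [numMax_eq_filter, Finset.card_filter_add_card_filter_not (p := fun v : α => IsMax v)]
  exact (Finset.card_univ).symm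

lemma gap_eq_sum :
    gap α = ∑ v ∈ Finset.univ.filter (fun v : α => ¬ IsMax v),
      ((od v : ℤ) - 1) * ((dc v : ℤ) - 1) := by
  have expand : ∑ v ∈ Finset.univ.filter (fun v : α => ¬ IsMax v),
      ((od v : ℤ) - 1) * ((dc v : ℤ) - 1)
      = (∑ v ∈ Finset.univ.filter (fun v : α => ¬ IsMax v), ((od v * dc v : ℕ) : ℤ))
        - (∑ v ∈ Finset.univ.filter (fun v : α => ¬ IsMax v), ((od v : ℕ) : ℤ))
        - (∑ v ∈ Finset.univ.filter (fun v : α => ¬ IsMax v), ((dc v : ℕ) : ℤ))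
        + (Finset.univ.filter (fun v : α => ¬ IsMax v)).card := by
    rw [Finset.sum_congr rfl (fun v _ => by push_cast; ring :
      ∀ v ∈ Finset.univ.filter (fun v : α => ¬ IsMax v),
        ((od v : ℤ) - 1) * ((dc v : ℤ) - 1)
          = ((od v * dc v : ℕ) : ℤ) - ((od v : ℕ) : ℤ) - ((dc v : ℕ) : ℤ) + 1)]
    rw [Finset.sum_add_distrib, Finset.sum_sub_distrib, Finset.sum_sub_distrib,
      Finset.sum_const, nsmul_eq_mul, mul_one]
  have e1 := sum_odc (α := α)
  have e2 := sum_dc_split (α := α)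
  have e3 := edges_split (α := α)
  have e4 := card_split (α := α)
  rw [gap, expand, Nat.card_eq_fintype_card]
  have c1 : ((∑ v ∈ Finset.univ.filter (fun v : α => ¬ IsMax v), od v * dc v : ℕ) : ℤ)
      + (numMin α : ℤ) = ((∑ v : α, dc v : ℕ) : ℤ) := by exact_mod_cast congrArg (fun n : ℕ => (n : ℤ)) e1
  have c2 : ((∑ v : α, dc v : ℕ) : ℤ) = (numMaxChains α : ℤ)
      + ((∑ v ∈ Finset.univ.filter (fun v : α => ¬ IsMax v), dc v : ℕ) : ℤ) := by
    exact_mod_cast congrArg (fun n : ℕ => (n : ℤ)) e2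
  have c3 : (numEdges α : ℤ)
      = ((∑ v ∈ Finset.univ.filter (fun v : α => ¬ IsMax v), od v : ℕ) : ℤ) := by
    exact_mod_cast congrArg (fun n : ℕ => (n : ℤ)) e3
  have c4 : (Fintype.card α : ℤ) = (numMax α : ℤ)
      + ((Finset.univ.filter (fun v : α => ¬ IsMax v)).card : ℤ) := by
    exact_mod_cast congrArg (fun n : ℕ => (n : ℤ)) e4
  push_cast at c1 c2 c3 c4 ⊢
  linarith

lemma crossing_zero_iff (v : α) : crossingNumber v = 0 ↔ uc v = 1 ∨ dc v = 1 := by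
  have h1 := uc_pos v; have h2 := dc_pos v
  rw [crossingNumber, Nat.mul_eq_zero]
  omega

lemma key_forward (h : ∀ v : α, ¬ IsMax v → od v = 1 ∨ dc v = 1) (v : α) :
    uc v = 1 ∨ dc v = 1 := by
  refine WellFounded.induction (C := fun x => uc x = 1 ∨ dc x = 1)
    (Finite.to_wellFoundedGT (α := α)).wf v ?_
  intro x ih
  by_cases hx : IsMax x
  · exact Or.inl (uc_max hx)
  by_cases hdc : dc x = 1
  · exact Or.inr hdc
  have hod : od x = 1 := (h x hx).resolve_right hdc
  have hcard : Fintype.card {w // x ⋖ w} = 1 := by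
    rw [← Nat.card_eq_fintype_card]; exact hod
  obtain ⟨w₀, hw₀⟩ := Fintype.card_eq_one_iff.mp hcard
  haveI : Unique {w // x ⋖ w} := ⟨⟨w₀⟩, hw₀⟩
  have hsum : uc x = uc w₀.1 := by
    rw [uc_rec hx, Fintype.sum_unique, hw₀ default]
  have hdcw : dc w₀.1 ≠ 1 := by
    have := dc_le_of_covBy w₀.2
    have := dc_pos x
    omega
  rcases ih w₀.1 w₀.2.lt with h1 | h2
  · exact Or.inl (hsum ▸ h1)
  · exact absurd h2 hdcw

lemma key_backward (h : ∀ v : α, uc v = 1 ∨ dc v = 1) (v : α) (hv : ¬ IsMax v) :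
    od v = 1 ∨ dc v = 1 := by
  rcases h v with h1 | h2
  · left
    have h3 := od_le_uc hv
    have h4 := od_pos hv
    omega
  · exact Or.inr h2

theorem gap_zero_iff_crossing_zero_aux :
    gap α = 0 ↔ ∀ v : α, crossingNumber v = 0 := by
  have hnonneg : ∀ v ∈ Finset.univ.filter (fun v : α => ¬ IsMax v),
      (0 : ℤ) ≤ ((od v : ℤ) - 1) * ((dc v : ℤ) - 1) := by
    intro v hv
    have h1 := od_pos (Finset.mem_filter.mp hv).2
    have h2 := dc_pos v
    have : (1 : ℤ) ≤ (od v : ℤ) := by exact_mod_cast h1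
    have : (1 : ℤ) ≤ (dc v : ℤ) := by exact_mod_cast h2
    nlinarith
  rw [gap_eq_sum, Finset.sum_eq_zero_iff_of_nonneg hnonneg]
  constructor
  · intro h v
    rw [crossing_zero_iff]
    refine key_forward (fun u hu => ?_) v
    have hterm := h u (Finset.mem_filter.mpr ⟨Finset.mem_univ u, hu⟩)
    have hop := od_pos hu
    have hdp := dc_pos u
    rcases mul_eq_zero.mp hterm with h' | h'
    · left
      have : (od u : ℤ) = 1 := by linarith
      exact_mod_cast this
    · right
      have : (dc u : ℤ) = 1 := by linarith
      exact_mod_cast this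
  · intro h v hv
    rcases key_backward (fun u => (crossing_zero_iff u).mp (h u)) v
        (Finset.mem_filter.mp hv).2 with h1 | h1 <;>
      rw [h1] <;> simp

end Aux2

theorem gap_zero_iff_crossing_zero (α : Type*) [Fintype α] [PartialOrder α] :
    gap α = 0 ↔ ∀ v : α, crossingNumber v = 0 := by
  exact gap_zero_iff_crossing_zero_aux
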